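/- Let (N,w) be a concave p-additive game with p < 0. Then |N₊| ≤ 2, i.e., at most two players have positive individual value. -/

import Mathlib

open Finset

variable {ι : Type*} [DecidableEq ι] [Fintype ι]

/-- The set of players in `S` with positive individual value. -/
noncomputable def Splus (w : Finset ι → ℝ) (S : Finset ι) : Finset ι :=
  S.filter fun i => 0 < w {i}

/-- A TU game `w` (with `w ∅ = 0`) is `p`-additive. -/
def PAdditive (p : ℝ) (w : Finset ι → ℝ) : Prop :=
  w ∅ = 0 ∧ (∀ S, 0 ≤ w S) ∧
  (∀ S : Finset ι, (∀ i ∈ S, w {i} = 0) → w S = 0) ∧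
  ∀ S : Finset ι, (Splus w S).Nonempty → w S ^ p = ∑ i ∈ Splus w S, w {i} ^ p

private lemma strictConvexOn_rpow_neg {q : ℝ} (hq : q < 0) :
    StrictConvexOn ℝ (Set.Ioi (0:ℝ)) (fun x : ℝ => x ^ q) := by
  apply strictConvexOn_of_deriv2_pos (convex_Ioi 0)
  · intro x hx
    exact (Real.continuousAt_rpow_const x q (Or.inl (ne_of_gt hx))).continuousWithinAt
  · intro x hx
    rw [interior_Ioi] at hx
    have hx0 : (0:ℝ) < x := hx
    have h1 : deriv (fun y : ℝ => y ^ q) =ᶠ[nhds x] fun y => q * y ^ (q - 1) := by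
      filter_upwards [eventually_ne_nhds (ne_of_gt hx0)] with y hy
      exact Real.deriv_rpow_const y q
    have h2 : deriv^[2] (fun y : ℝ => y ^ q) x
        = deriv (deriv (fun y : ℝ => y ^ q)) x := rfl
    rw [h2, Filter.EventuallyEq.deriv_eq h1]
    have h3 : deriv (fun y : ℝ => q * y ^ (q - 1)) x = q * ((q - 1) * x ^ (q - 1 - 1)) := by
      rw [deriv_const_mul _ (Real.differentiableAt_rpow_const_of_ne _ (ne_of_gt hx0)),
        Real.deriv_rpow_const x (q - 1)]
    rw [h3, ← mul_assoc]
    exact mul_pos (mul_pos_of_neg_of_neg hq (by linarith)) (Real.rpow_pos_of_pos hx0 _)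

theorem padditive_concave_card_le_two (p : ℝ) (hp : p < 0)
    (w : Finset ι → ℝ) (hw : PAdditive p w)
    (hconcave : ∀ (i : ι) (S T : Finset ι), S ⊆ T → i ∉ T →
      w (insert i T) - w T ≤ w (insert i S) - w S) :
    (Splus w Finset.univ).card ≤ 2 := by
  by_contra h
  push_neg at h
  obtain ⟨t, hts, htc⟩ := Finset.exists_subset_card_eq h
  rw [Finset.card_eq_three] at htc
  obtain ⟨i, j, k, hij, hik, hjk, rfl⟩ := htc
  have hpos : ∀ x ∈ ({i, j, k} : Finset ι), 0 < w {x} := by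
    intro x hx
    have := hts hx
    simp only [Splus, Finset.mem_filter] at this
    exact this.2
  have hi : 0 < w {i} := hpos i (by simp)
  have hj : 0 < w {j} := hpos j (by simp)
  have hk : 0 < w {k} := hpos k (by simp)
  obtain ⟨-, hw0, -, hwp⟩ := hw
  set u := w {i} ^ p with hu
  set v := w {j} ^ p with hv
  set z := w {k} ^ p with hz
  have hu0 : 0 < u := Real.rpow_pos_of_pos hi p
  have hv0 : 0 < v := Real.rpow_pos_of_pos hj p
  have hz0 : 0 < z := Real.rpow_pos_of_pos hk p
  set f : ℝ → ℝ := fun x => x ^ p⁻¹ with hf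
  -- general lemma: value of a set of positive players
  have key : ∀ S : Finset ι, S.Nonempty → (∀ x ∈ S, 0 < w {x}) →
      w S = f (∑ x ∈ S, w {x} ^ p) := by
    intro S hSne hSpos
    have hsp : Splus w S = S := Finset.filter_true_of_mem hSpos
    have h1 : w S ^ p = ∑ x ∈ S, w {x} ^ p := by
      have := hwp S (by rw [hsp]; exact hSne)
      rwa [hsp] at this
    have h2 := Real.rpow_rpow_inv (hw0 S) (ne_of_lt hp)
    rw [hf]; dsimp only; rw [← h1, h2]
  -- the four coalition values
  have hmemij : ∀ x ∈ insert j ({i} : Finset ι), 0 < w {x} := by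
    intro x hx
    simp only [Finset.mem_insert, Finset.mem_singleton] at hx
    rcases hx with rfl | rfl
    · exact hj
    · exact hi
  have hmemik : ∀ x ∈ insert k ({i} : Finset ι), 0 < w {x} := by
    intro x hx
    simp only [Finset.mem_insert, Finset.mem_singleton] at hx
    rcases hx with rfl | rfl
    · exact hk
    · exact hi
  have hmemijk : ∀ x ∈ insert k (insert j ({i} : Finset ι)), 0 < w {x} := by
    intro x hx
    simp only [Finset.mem_insert, Finset.mem_singleton] at hx
    rcases hx with rfl | rfl | rfl
    · exact hk
    · exact hj
    · exact hi
  have hP1 : w {i} = f u := by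
    rw [key {i} (Finset.singleton_nonempty i) (fun x hx => by
      rw [Finset.mem_singleton] at hx; subst hx; exact hi), Finset.sum_singleton]
  have hP2 : w (insert j {i}) = f (u + v) := by
    rw [key _ (Finset.insert_nonempty _ _) hmemij,
      Finset.sum_insert (by simp [hij.symm]), Finset.sum_singleton, add_comm]
  have hP13 : w (insert k {i}) = f (u + z) := by
    rw [key _ (Finset.insert_nonempty _ _) hmemik,
      Finset.sum_insert (by simp [hik.symm]), Finset.sum_singleton, add_comm]
  have hP3 : w (insert k (insert j {i})) = f (u + v + z) := by
    rw [key _ (Finset.insert_nonempty _ _) hmemijk,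
      Finset.sum_insert (by simp [hik.symm, hjk.symm]),
      Finset.sum_insert (by simp [hij.symm]), Finset.sum_singleton]
    rw [← hu, ← hv, ← hz]; congr 1; ring
  -- concavity instance
  have hcav := hconcave k {i} (insert j {i}) (Finset.subset_insert _ _)
    (by simp [hik.symm, hjk.symm])
  rw [hP1, hP2, hP13, hP3] at hcav
  -- strict convexity of f
  have hq : p⁻¹ < 0 := inv_neg''.mpr hp
  have hc := strictConvexOn_rpow_neg hq
  set θ : ℝ := z / (v + z) with hθ
  have hvz : 0 < v + z := by linarith
  have hθ0 : 0 < θ := div_pos hz0 hvz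
  have hθ1 : 0 < 1 - θ := by
    rw [hθ]; rw [sub_pos, div_lt_one hvz]; linarith
  have hne : u ≠ u + v + z := by linarith
  have e1 : θ * u + (1 - θ) * (u + v + z) = u + v := by
    rw [hθ]; field_simp; ring
  have e2 : (1 - θ) * u + θ * (u + v + z) = u + z := by
    rw [hθ]; field_simp; ring
  have c1 : f (u + v) < θ * f u + (1 - θ) * f (u + v + z) := by
    have := hc.2 (Set.mem_Ioi.mpr hu0) (Set.mem_Ioi.mpr (by linarith : (0:ℝ) < u + v + z))
      hne hθ0 hθ1 (by ring)
    simpa [smul_eq_mul, e1] using this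
  have c2 : f (u + z) < (1 - θ) * f u + θ * f (u + v + z) := by
    have := hc.2 (Set.mem_Ioi.mpr hu0) (Set.mem_Ioi.mpr (by linarith : (0:ℝ) < u + v + z))
      hne hθ1 hθ0 (by ring)
    simpa [smul_eq_mul, e2] using this
  linarith
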